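/- arXiv:2208.07808 — 4 statements merged into one kernel-verified Lean document; each statement's English description precedes it below -/
import Mathlib

section
/- Let (A, E, s) be a skeletally small extriangulated category. For objects M, M' of A, one has [M] = [M'] in the Grothendieck monoid M(A, E, s) if and only if there exists a finite sequence of objects M = A_0, A_1, …, A_n = M' of A such that for each 1 ≤ i ≤ n, the objects A_{i-1} and A_i admit isomorphic (E, s)-inflation series. -/
/-!
Common axiomatic framework: extriangulated categories in the sense of Nakaoka–Palu,
formalised as a biadditive functor `E` together with a realisation predicate
`IsExtriangle` subject to the axioms (ET1)–(ET4), (ET3)ᵒᵖ, (ET4)ᵒᵖ.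
-/

open CategoryTheory CategoryTheory.Limits ZeroObject

attribute [local instance] CategoryTheory.Limits.hasBinaryBiproducts_of_finite_biproducts

universe v u

namespace ExtriPaper

/-- The data underlying an extriangulated category: a biadditive functor `E` and,
for each extension `δ ∈ E(X, A)`, the predicate picking out the pairs of composable
morphisms `A ⟶ B ⟶ X` belonging to the equivalence class `s(δ)`. -/
structure PreExt (C : Type u) [Category.{v} C] [Preadditive C] where
  E : Cᵒᵖ ⥤ C ⥤ AddCommGrpCat.{v}
  IsExtriangle : ∀ {A B X : C}, (A ⟶ B) → (B ⟶ X) → ↥((E.obj (Opposite.op X)).obj A) → Prop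

namespace PreExt

variable {C : Type u} [Category.{v} C] [Preadditive C]
variable (S : PreExt C)

/-- The group `E(X, A)` of extensions of `X` by `A`. -/
abbrev Ext (X A : C) : Type v := ↥((S.E.obj (Opposite.op X)).obj A)

/-- Pushforward `a_* δ` of an extension along `a : A ⟶ A'`. -/
def push {X A A' : C} (a : A ⟶ A') (δ : S.Ext X A) : S.Ext X A' :=
  (S.E.obj (Opposite.op X)).map a δ

/-- Pullback `c^* δ` of an extension along `c : X' ⟶ X`. -/
def pull {X' X A : C} (c : X' ⟶ X) (δ : S.Ext X A) : S.Ext X' A :=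
  (S.E.map c.op).app A δ

section Axioms

variable [HasZeroObject C] [HasFiniteBiproducts C]

/-- The direct sum `δ ⊕ δ'` of two extensions. -/
noncomputable def sumExt {X X' A A' : C} (δ : S.Ext X A) (δ' : S.Ext X' A') :
    S.Ext (X ⊞ X') (A ⊞ A') :=
  S.push biprod.inl (S.pull biprod.fst δ) + S.push biprod.inr (S.pull biprod.snd δ')

/-- The axioms of an extriangulated category (Nakaoka–Palu): `E` is biadditive,
`s` (encoded by `IsExtriangle`) is an additive realisation defined on equivalence
classes, and the axioms (ET3), (ET3)ᵒᵖ, (ET4), (ET4)ᵒᵖ hold. -/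
structure IsET : Prop where
  /-- Biadditivity of `E` in the covariant variable. -/
  push_add : ∀ {X A A' : C} (a b : A ⟶ A') (δ : S.Ext X A),
      S.push (a + b) δ = S.push a δ + S.push b δ
  /-- Biadditivity of `E` in the contravariant variable. -/
  pull_add : ∀ {X X' A : C} (c d : X' ⟶ X) (δ : S.Ext X A),
      S.pull (c + d) δ = S.pull c δ + S.pull d δ
  /-- Every extension is realised by a pair of composable morphisms. -/
  realize_exists : ∀ {A X : C} (δ : S.Ext X A),
      ∃ (B : C) (f : A ⟶ B) (g : B ⟶ X), S.IsExtriangle f g δ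
  /-- The realisation is closed under equivalence of pairs of composable morphisms. -/
  realize_iso : ∀ {A B B' X : C} {f : A ⟶ B} {g : B ⟶ X} {δ : S.Ext X A} (e : B ≅ B'),
      S.IsExtriangle f g δ → S.IsExtriangle (f ≫ e.hom) (e.inv ≫ g) δ
  /-- Any two realisations of the same extension are equivalent. -/
  realize_unique : ∀ {A B B' X : C} {f : A ⟶ B} {g : B ⟶ X} {f' : A ⟶ B'} {g' : B' ⟶ X}
      {δ : S.Ext X A}, S.IsExtriangle f g δ → S.IsExtriangle f' g' δ →
      ∃ e : B ≅ B', f ≫ e.hom = f' ∧ e.hom ≫ g' = g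
  /-- Morphisms of extensions lift to morphisms of extriangles. -/
  realize_map : ∀ {A B X A' B' X' : C} {f : A ⟶ B} {g : B ⟶ X} {δ : S.Ext X A}
      {f' : A' ⟶ B'} {g' : B' ⟶ X'} {δ' : S.Ext X' A'},
      S.IsExtriangle f g δ → S.IsExtriangle f' g' δ' →
      ∀ (a : A ⟶ A') (c : X ⟶ X'), S.push a δ = S.pull c δ' →
      ∃ b : B ⟶ B', f ≫ b = a ≫ f' ∧ b ≫ g' = g ≫ c
  /-- The zero extension is realised by the split pair. -/
  realize_zero : ∀ (A X : C),
      S.IsExtriangle (biprod.inl : A ⟶ A ⊞ X) (biprod.snd : A ⊞ X ⟶ X) (0 : S.Ext X A)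
  /-- The realisation is additive. -/
  realize_sum : ∀ {A B X A' B' X' : C} {f : A ⟶ B} {g : B ⟶ X} {δ : S.Ext X A}
      {f' : A' ⟶ B'} {g' : B' ⟶ X'} {δ' : S.Ext X' A'},
      S.IsExtriangle f g δ → S.IsExtriangle f' g' δ' →
      S.IsExtriangle (biprod.map f f') (biprod.map g g') (S.sumExt δ δ')
  /-- Axiom (ET3). -/
  et3 : ∀ {A B X A' B' X' : C} {f : A ⟶ B} {g : B ⟶ X} {δ : S.Ext X A}
      {f' : A' ⟶ B'} {g' : B' ⟶ X'} {δ' : S.Ext X' A'},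
      S.IsExtriangle f g δ → S.IsExtriangle f' g' δ' →
      ∀ (a : A ⟶ A') (b : B ⟶ B'), f ≫ b = a ≫ f' →
      ∃ c : X ⟶ X', g ≫ c = b ≫ g' ∧ S.push a δ = S.pull c δ'
  /-- Axiom (ET3)ᵒᵖ. -/
  et3op : ∀ {A B X A' B' X' : C} {f : A ⟶ B} {g : B ⟶ X} {δ : S.Ext X A}
      {f' : A' ⟶ B'} {g' : B' ⟶ X'} {δ' : S.Ext X' A'},
      S.IsExtriangle f g δ → S.IsExtriangle f' g' δ' →
      ∀ (b : B ⟶ B') (c : X ⟶ X'), g ≫ c = b ≫ g' →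
      ∃ a : A ⟶ A', f ≫ b = a ≫ f' ∧ S.push a δ = S.pull c δ'
  /-- Axiom (ET4). -/
  et4 : ∀ {A B D F G : C} {f : A ⟶ B} {f' : B ⟶ D} {δ : S.Ext D A}
      {g : B ⟶ G} {g' : G ⟶ F} {δ' : S.Ext F B},
      S.IsExtriangle f f' δ → S.IsExtriangle g g' δ' →
      ∃ (E₀ : C) (h : G ⟶ E₀) (d : D ⟶ E₀) (e : E₀ ⟶ F) (δ'' : S.Ext E₀ A),
        S.IsExtriangle (f ≫ g) h δ'' ∧
        S.IsExtriangle d e (S.push f' δ') ∧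
        S.pull d δ'' = δ ∧
        S.push f δ'' = S.pull e δ' ∧
        f' ≫ d = g ≫ h ∧ h ≫ e = g'
  /-- Axiom (ET4)ᵒᵖ. -/
  et4op : ∀ {D B A F G : C} {p : D ⟶ B} {f₁ : B ⟶ A} {δ₁ : S.Ext A D}
      {q : F ⟶ G} {g₁ : G ⟶ B} {δ₁' : S.Ext B F},
      S.IsExtriangle p f₁ δ₁ → S.IsExtriangle q g₁ δ₁' →
      ∃ (E₀ : C) (h : E₀ ⟶ G) (d : E₀ ⟶ D) (e : F ⟶ E₀) (δ'' : S.Ext A E₀),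
        S.IsExtriangle h (g₁ ≫ f₁) δ'' ∧
        S.IsExtriangle e d (S.pull p δ₁') ∧
        S.push d δ'' = δ₁ ∧
        S.pull f₁ δ'' = S.push e δ₁' ∧
        d ≫ p = h ≫ g₁ ∧ e ≫ h = q

end Axioms

/-- A morphism is an inflation if it occurs as the first morphism of an extriangle. -/
def IsInflation {A B : C} (f : A ⟶ B) : Prop :=
  ∃ (X : C) (g : B ⟶ X) (δ : S.Ext X A), S.IsExtriangle f g δ

/-- A morphism is a deflation if it occurs as the second morphism of an extriangle. -/
def IsDeflation {B X : C} (g : B ⟶ X) : Prop :=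
  ∃ (A : C) (f : A ⟶ B) (δ : S.Ext X A), S.IsExtriangle f g δ

/-- An isomorphism of extriangles: a triple of isomorphisms compatible with the
structure morphisms and identifying the two extensions. -/
def TriIso {A B X A' B' X' : C} (f : A ⟶ B) (g : B ⟶ X) (δ : S.Ext X A)
    (f' : A' ⟶ B') (g' : B' ⟶ X') (δ' : S.Ext X' A') : Prop :=
  ∃ (iA : A ≅ A') (iB : B ≅ B') (iX : X ≅ X'),
    f ≫ iB.hom = iA.hom ≫ f' ∧ g ≫ iX.hom = iB.hom ≫ g' ∧
    S.push iA.hom δ = S.pull iX.hom δ'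

/-- A chain of `t` composable extriangles: inflations `obj i ⟶ obj (i+1)` each fitting
in an extriangle with cone `factor i`.  This underlies filtrations, inflation series
and composition series alike. -/
structure FChain (t : ℕ) where
  obj : Fin (t + 1) → C
  factor : Fin t → C
  f : ∀ i : Fin t, obj i.castSucc ⟶ obj i.succ
  g : ∀ i : Fin t, obj i.succ ⟶ factor i
  δ : ∀ i : Fin t, S.Ext (factor i) (obj i.castSucc)
  ext : ∀ i : Fin t, S.IsExtriangle (f i) (g i) (δ i)

/-- The composite `obj 0 ⟶ obj i` of the morphisms of a chain. -/
def FChain.comp {t : ℕ} (c : S.FChain t) : ∀ i : Fin (t + 1), c.obj 0 ⟶ c.obj i :=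
  Fin.induction (𝟙 _) (fun i ih => ih ≫ c.f i)

/-- The subcategory `F(P)` of objects admitting a filtration with factors in `P`. -/
def Filt (P : Set C) : Set C :=
  {M | ∃ (t : ℕ) (c : S.FChain t), IsZero (c.obj 0) ∧ c.obj (Fin.last t) = M ∧
      ∀ i, c.factor i ∈ P}

/-- An `(E, s)`-simple object: a non-zero object `M` such that in every extriangle
`A →a M → X ⇢` the inflation `a` is zero or an isomorphism. -/
def SSimple (M : C) : Prop :=
  ¬ IsZero M ∧ ∀ (A X : C) (a : A ⟶ M) (g : M ⟶ X) (δ : S.Ext X A),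
    S.IsExtriangle a g δ → a = 0 ∨ IsIso a

/-- The zero objects of `C` are `(E, s)`-simple-like. -/
def ZeroSimpleLike : Prop :=
  ∀ (A Z X : C) (f : A ⟶ Z) (g : Z ⟶ X) (δ : S.Ext X A),
    IsZero Z → S.IsExtriangle f g δ → IsZero A

/-- `c` is an `(E, s)`-composition series of `M`. -/
def IsCompSeries {t : ℕ} (c : S.FChain t) (M : C) : Prop :=
  IsZero (c.obj 0) ∧ c.obj (Fin.last t) = M ∧ ∀ i, S.SSimple (c.factor i)

/-- `(A, E, s)` is a length extriangulated category. -/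
def LengthCat : Prop :=
  ∀ M : C, (∃ (t : ℕ) (c : S.FChain t), S.IsCompSeries c M) ∧
    ∃ N : ℕ, ∀ (t : ℕ) (c : S.FChain t), S.IsCompSeries c M → t ≤ N

/-- `(A, E, s)` is a Jordan–Hölder extriangulated category: any two composition series
of an object have the same length and, up to a permutation, isomorphic simple factors. -/
def JordanHolder : Prop :=
  ∀ (M : C) (t t' : ℕ) (c : S.FChain t) (c' : S.FChain t'),
    S.IsCompSeries c M → S.IsCompSeries c' M →
    ∃ e : Fin t ≃ Fin t', ∀ i, Nonempty (c.factor i ≅ c'.factor (e i))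

/-- `c` is an `(E, s)`-inflation series of `B`: a filtration of `B` with non-zero factors. -/
def IsInflSeries {t : ℕ} (c : S.FChain t) (B : C) : Prop :=
  IsZero (c.obj 0) ∧ c.obj (Fin.last t) = B ∧ ∀ i, ¬ IsZero (c.factor i)

/-- `X` and `Y` admit isomorphic `(E, s)`-inflation series. -/
def HaveIsoInflSeries (X Y : C) : Prop :=
  ∃ (t : ℕ) (c d : S.FChain t), S.IsInflSeries c X ∧ S.IsInflSeries d Y ∧
    ∃ e : Equiv.Perm (Fin t), ∀ i, Nonempty (c.factor i ≅ d.factor (e i))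

/-- Simplicity of `M` with respect to the extriangulated structure restricted to the
extension-closed subcategory `𝒮`: extriangles of the restricted structure are exactly
the ambient extriangles all of whose terms lie in `𝒮`. -/
def SimpleIn (𝒮 : Set C) (M : C) : Prop :=
  M ∈ 𝒮 ∧ ¬ IsZero M ∧ ∀ (A X : C) (a : A ⟶ M) (g : M ⟶ X) (δ : S.Ext X A),
    A ∈ 𝒮 → X ∈ 𝒮 → S.IsExtriangle a g δ → a = 0 ∨ IsIso a

/-- `c` is a composition series of `M` in the extriangulated structure restricted to `𝒮`. -/
def IsCompSeriesIn (𝒮 : Set C) {t : ℕ} (c : S.FChain t) (M : C) : Prop :=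
  IsZero (c.obj 0) ∧ c.obj (Fin.last t) = M ∧ (∀ i, c.obj i ∈ 𝒮) ∧
    ∀ i, S.SimpleIn 𝒮 (c.factor i)

section Star

variable [HasZeroObject C] [HasFiniteBiproducts C]

/-- The subcategory `P ∗ Q` of objects `Z` admitting an extriangle `X → Z → Y ⇢`
with `X ∈ P` and `Y ∈ Q`. -/
def star (P Q : Set C) : Set C :=
  {Z | ∃ (X Y : C) (f : X ⟶ Z) (g : Z ⟶ Y) (δ : S.Ext Y X),
      X ∈ P ∧ Y ∈ Q ∧ S.IsExtriangle f g δ}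

/-- Iterated `∗` of a list of subcategories (the empty `∗` being the zero objects). -/
def starMany : List (Set C) → Set C
  | [] => {Z | IsZero Z}
  | P :: l => S.star P (starMany l)

end Star

/-- The relative projectives `P(P) = {Z : E(Z, Y) = 0 for all Y ∈ F(P)}`. -/
def projSet (P : Set C) : Set C :=
  {Z | ∀ Y ∈ S.Filt P, ∀ δ : S.Ext Z Y, δ = 0}

/-- `Hom(W, −)` is left exact on the extriangulated structure restricted to `𝒮`:
for every extriangle `A →a B → X ⇢` with all terms in `𝒮`, composition with `a`
is injective on morphisms from `W`. -/
def HomLeftExactOn (W : C) (𝒮 : Set C) : Prop :=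
  ∀ (A B X : C) (a : A ⟶ B) (g : B ⟶ X) (δ : S.Ext X A),
    A ∈ 𝒮 → B ∈ 𝒮 → X ∈ 𝒮 → S.IsExtriangle a g δ →
    ∀ φ ψ : W ⟶ A, φ ≫ a = ψ ≫ a → φ = ψ

/-- The subset of the free abelian group on objects consisting of the defining
relations of the Grothendieck group `K₀(A, E, s)`. -/
def K0Rels : Set (FreeAbelianGroup C) :=
  {x | ∃ (A B X : C) (f : A ⟶ B) (g : B ⟶ X) (δ : S.Ext X A), S.IsExtriangle f g δ ∧
      x = FreeAbelianGroup.of A + FreeAbelianGroup.of X - FreeAbelianGroup.of B} ∪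
  {x | ∃ (X Y : C) (_ : X ≅ Y), x = FreeAbelianGroup.of X - FreeAbelianGroup.of Y}

/-- `[M] = [M']` in the Grothendieck group `K₀(A, E, s)`, the quotient of the free
abelian group on (isomorphism classes of) objects by the extriangle relations. -/
def GrpRel (M M' : C) : Prop :=
  FreeAbelianGroup.of M - FreeAbelianGroup.of M' ∈ AddSubgroup.closure S.K0Rels

end PreExt

/-- The congruence defining the Grothendieck monoid: `MonRel S M M'` holds if and only
if `[M] = [M']` in the Grothendieck monoid `M(A, E, s)`, the quotient of the monoid of
isomorphism classes of objects (under `⊞`) by the congruence generated by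
`[B] ∼ [A] + [X]` for each extriangle `A → B → X ⇢`. -/
inductive MonRel {C : Type u} [Category.{v} C] [Preadditive C] [HasZeroObject C]
    [HasFiniteBiproducts C] (S : PreExt C) : C → C → Prop
  | of {A B X : C} {f : A ⟶ B} {g : B ⟶ X} {δ : S.Ext X A}
      (h : S.IsExtriangle f g δ) : MonRel S B (A ⊞ X)
  | iso {X Y : C} (e : X ≅ Y) : MonRel S X Y
  | symm {X Y : C} : MonRel S X Y → MonRel S Y X
  | trans {X Y Z : C} : MonRel S X Y → MonRel S Y Z → MonRel S X Z
  | add {X Y : C} (Z : C) : MonRel S X Y → MonRel S (X ⊞ Z) (Y ⊞ Z)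

/-- `[M]` is an atom of the Grothendieck monoid `M(A, E, s)`. -/
def IsAtomClass {C : Type u} [Category.{v} C] [Preadditive C] [HasZeroObject C]
    [HasFiniteBiproducts C] (S : PreExt C) (M : C) : Prop :=
  ¬ MonRel S M 0 ∧ ∀ X Y : C, MonRel S M (X ⊞ Y) → MonRel S X 0 ∨ MonRel S Y 0

/-- An additive category is weakly idempotent complete if every retraction admits a kernel. -/
def WeaklyIdemComplete (C : Type u) [Category.{v} C] [Preadditive C] : Prop :=
  ∀ (X Y : C) (r : X ⟶ Y), IsSplitEpi r → HasKernel r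

/-- A set of objects is closed under direct summands. -/
def ClosedSummands {C : Type u} [Category.{v} C] [Preadditive C] [HasZeroObject C]
    [HasFiniteBiproducts C] (P : Set C) : Prop :=
  ∀ (X Y Z : C), Z ∈ P → Nonempty (Z ≅ X ⊞ Y) → X ∈ P

/-- A Krull–Schmidt category: every object is a finite biproduct of objects having
local endomorphism rings. -/
def KrullSchmidtCat (C : Type u) [Category.{v} C] [Preadditive C] [HasZeroObject C]
    [HasFiniteBiproducts C] : Prop :=
  ∀ X : C, ∃ (n : ℕ) (Y : Fin n → C),
    (∀ i, IsLocalRing (End (Y i))) ∧ Nonempty (X ≅ ⨁ Y)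

/-- The closure `add Ψ` of a set of objects under finite direct sums and isomorphisms. -/
def addSet {C : Type u} [Category.{v} C] [Preadditive C] [HasZeroObject C]
    [HasFiniteBiproducts C] (P : Set C) : Set C :=
  {X | ∃ (m : ℕ) (f : Fin m → C), (∀ k, f k ∈ P) ∧ Nonempty (X ≅ ⨁ f)}

/-- An indecomposable object. -/
def Indec {C : Type u} [Category.{v} C] [Preadditive C] [HasZeroObject C]
    [HasFiniteBiproducts C] (X : C) : Prop :=
  ¬ IsZero X ∧ ∀ (Y Z : C), Nonempty (X ≅ Y ⊞ Z) → IsZero Y ∨ IsZero Z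

/-- A morphism `q` is right minimal. -/
def RightMinimal {C : Type u} [Category.{v} C] {X Y : C} (q : X ⟶ Y) : Prop :=
  ∀ g : X ⟶ X, g ≫ q = q → IsIso g

/-- The extra structure making an extriangulated category into an artin `R`-linear
extriangulated category: an `R`-module structure on each `E(X, A)` for which `E` is
`R`-bilinear, with all Hom-sets and all `E(X, A)` of finite length over `R`. -/
structure ArtinLinear {C : Type u} [Category.{v} C] [Preadditive C]
    (R : Type*) [CommRing R] [CategoryTheory.Linear R C] (S : PreExt C) where
  module : ∀ X A : C, Module R (S.Ext X A)
  push_smul : ∀ {X A A' : C} (r : R) (a : A ⟶ A') (δ : S.Ext X A),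
      S.push (r • a) δ = letI := module X A'; r • S.push a δ
  pull_smul : ∀ {X' X A : C} (r : R) (c : X' ⟶ X) (δ : S.Ext X A),
      S.pull (r • c) δ = letI := module X' A; r • S.pull c δ
  homFinite : ∀ X Y : C, IsFiniteLength R (X ⟶ Y)
  extFinite : ∀ X A : C, letI := module X A; IsFiniteLength R (S.Ext X A)

/-- An `E`-stratifying system: a finite family of indecomposable objects subject to
the orthogonality axioms (S1) and (S2). -/
structure IsStratSys {C : Type u} [Category.{v} C] [Preadditive C] [HasZeroObject C]
    [HasFiniteBiproducts C] (S : PreExt C) {n : ℕ} (Φ : Fin n → C) : Prop where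
  indec : ∀ i, Indec (Φ i)
  s1 : ∀ i j : Fin n, i < j → ∀ φ : Φ j ⟶ Φ i, φ = 0
  s2 : ∀ i j : Fin n, i ≤ j → ∀ δ : S.Ext (Φ j) (Φ i), δ = 0

/-- The data of extriangles `K i → Q i → Φ i ⇢η i` with `K i ∈ F(Φ_{j>i})`, as in
axiom (PS2) of a projective `E`-stratifying system. -/
structure ProjData {C : Type u} [Category.{v} C] [Preadditive C]
    (S : PreExt C) {n : ℕ} (Φ Q : Fin n → C) where
  K : Fin n → C
  k : ∀ i, K i ⟶ Q i
  q : ∀ i, Q i ⟶ Φ i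
  η : ∀ i, S.Ext (Φ i) (K i)
  ext : ∀ i, S.IsExtriangle (k i) (q i) (η i)
  kmem : ∀ i, K i ∈ S.Filt (Φ '' {j | i < j})

/-- `(Φ, Q)` is a projective `E`-stratifying system. -/
def IsProjSS {C : Type u} [Category.{v} C] [Preadditive C] [HasZeroObject C]
    [HasFiniteBiproducts C] (S : PreExt C) {n : ℕ} (Φ Q : Fin n → C) : Prop :=
  IsStratSys S Φ ∧ (∀ i j : Fin n, ∀ δ : S.Ext (Q i) (Φ j), δ = 0) ∧
    Nonempty (ProjData S Φ Q)

/-- `(Φ, Q)` is a minimal projective `E`-stratifying system: the morphisms `q i` of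
the extriangles witnessing (PS2) may be chosen right minimal. -/
def IsMinProjSS {C : Type u} [Category.{v} C] [Preadditive C] [HasZeroObject C]
    [HasFiniteBiproducts C] (S : PreExt C) {n : ℕ} (Φ Q : Fin n → C) : Prop :=
  IsStratSys S Φ ∧ (∀ i j : Fin n, ∀ δ : S.Ext (Q i) (Φ j), δ = 0) ∧
    ∃ d : ProjData S Φ Q, ∀ i, RightMinimal (d.q i)

noncomputable section Aux
set_option linter.unusedSectionVars false

variable {C : Type u} [Category.{v} C] [Preadditive C] [HasZeroObject C] [HasFiniteBiproducts C]
variable (S : PreExt C)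

open PreExt

lemma aux_push_zero (hS : S.IsET) {X A A' : C} (δ : S.Ext X A) :
    S.push (0 : A ⟶ A') δ = 0 := by
  have hp := hS.push_add (0 : A ⟶ A') 0 δ
  rw [add_zero] at hp
  have h2 : S.push (0 : A ⟶ A') δ + 0 = S.push (0 : A ⟶ A') δ + S.push (0 : A ⟶ A') δ := by
    rw [add_zero]; exact hp
  exact (add_left_cancel h2).symm

lemma aux_pull_zero (hS : S.IsET) {X X' A : C} (δ : S.Ext X A) :
    S.pull (0 : X' ⟶ X) δ = 0 := by
  have hp := hS.pull_add (0 : X' ⟶ X) 0 δ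
  rw [add_zero] at hp
  have h2 : S.pull (0 : X' ⟶ X) δ + 0 = S.pull (0 : X' ⟶ X) δ + S.pull (0 : X' ⟶ X) δ := by
    rw [add_zero]; exact hp
  exact (add_left_cancel h2).symm

lemma aux_push_id {X A : C} (δ : S.Ext X A) : S.push (𝟙 A) δ = δ := by
  simp [PreExt.push]

lemma aux_pull_id {X A : C} (δ : S.Ext X A) : S.pull (𝟙 X) δ = δ := by
  simp [PreExt.pull]

/-- If `A` is a zero object, the extension `δ` vanishes. -/
lemma aux_delta_zero_of_src (hS : S.IsET) {A B X : C} (hA : IsZero A)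
    {f : A ⟶ B} {g : B ⟶ X} {δ : S.Ext X A} (_ : S.IsExtriangle f g δ) : δ = 0 := by
  have h1 : (𝟙 A) = (0 : A ⟶ A) := hA.eq_of_src _ _
  have := aux_push_id S δ
  rw [h1, aux_push_zero S hS] at this
  exact this.symm

lemma aux_delta_zero_of_tgt (hS : S.IsET) {A B X : C} (hX : IsZero X)
    {f : A ⟶ B} {g : B ⟶ X} {δ : S.Ext X A} (_ : S.IsExtriangle f g δ) : δ = 0 := by
  have h1 : (𝟙 X) = (0 : X ⟶ X) := hX.eq_of_src _ _
  have := aux_pull_id S δ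
  rw [h1, aux_pull_zero S hS] at this
  exact this.symm

variable {S}

/-- `N ⊞ W ≅ W` when `N` is zero. -/
def auxIsoL {N : C} (hN : IsZero N) (W : C) : N ⊞ W ≅ W where
  hom := biprod.snd
  inv := biprod.inr
  hom_inv_id := by
    apply biprod.hom_ext'
    · simp only [biprod.inl_snd_assoc, zero_comp, Category.comp_id]
      exact hN.eq_of_src _ _
    · simp
  inv_hom_id := by simp

/-- `W ⊞ N ≅ W` when `N` is zero. -/
def auxIsoR {N : C} (hN : IsZero N) (W : C) : W ⊞ N ≅ W where
  hom := biprod.fst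
  inv := biprod.inl
  hom_inv_id := by
    apply biprod.hom_ext
    · simp
    · simp only [Category.assoc, biprod.inl_snd, comp_zero, Category.id_comp]
      exact (hN.eq_of_tgt _ _).symm
  inv_hom_id := by simp

lemma aux_notZero_biprod_left {Z : C} (hZ : ¬ IsZero Z) (M : C) : ¬ IsZero (Z ⊞ M) := by
  intro h
  apply hZ
  rw [IsZero.iff_id_eq_zero]
  have h1 : (biprod.inl : Z ⟶ Z ⊞ M) = 0 := h.eq_of_tgt _ _
  rw [← biprod.inl_fst (X := Z) (Y := M), h1, zero_comp]

lemma aux_notZero_biprod_right {Z : C} (hZ : ¬ IsZero Z) (M : C) : ¬ IsZero (M ⊞ Z) := by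
  intro h
  apply hZ
  rw [IsZero.iff_id_eq_zero]
  have h1 : (biprod.inr : Z ⟶ M ⊞ Z) = 0 := h.eq_of_tgt _ _
  rw [← biprod.inr_snd (X := M) (Y := Z), h1, zero_comp]

variable (S)

/-- An extriangle `0 ⟶ W ⟶ W`. -/
lemma aux_exists_zero_ext (hS : S.IsET) (W : C) :
    ∃ (f : (0 : C) ⟶ W) (g : W ⟶ W) (δ : S.Ext W (0 : C)), S.IsExtriangle f g δ :=
  ⟨_, _, _, hS.realize_iso (auxIsoL (isZero_zero C) W) (hS.realize_zero (0 : C) W)⟩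

/-- An extriangle `Z ⟶ Z ⟶ 0`. -/
lemma aux_exists_ext_zero (hS : S.IsET) (Z : C) :
    ∃ (u : Z ⟶ Z) (v : Z ⟶ (0 : C)) (δ : S.Ext (0 : C) Z), S.IsExtriangle u v δ :=
  ⟨_, _, _, hS.realize_iso (auxIsoR (isZero_zero C) Z) (hS.realize_zero Z (0 : C))⟩

variable {S}

/-- The trivial chain. -/
def PreExt.FChain.nil (S : PreExt C) (Z : C) : S.FChain 0 where
  obj := fun _ => Z
  factor := Fin.elim0
  f := fun i => i.elim0
  g := fun i => i.elim0
  δ := fun i => i.elim0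
  ext := fun i => i.elim0

/-- Prepend a step at the bottom of a chain. -/
def PreExt.FChain.cons {t : ℕ} (c : S.FChain t) {N F : C} (f₀ : N ⟶ c.obj 0) (g₀ : c.obj 0 ⟶ F)
    (δ₀ : S.Ext F N) (h₀ : S.IsExtriangle f₀ g₀ δ₀) : S.FChain (t + 1) where
  obj := Fin.cons N c.obj
  factor := Fin.cons F c.factor
  f := Fin.cases f₀ c.f
  g := Fin.cases g₀ c.g
  δ := Fin.cases δ₀ c.δ
  ext := Fin.cases h₀ c.ext

end Aux
noncomputable section Aux2
set_option linter.unusedSectionVars false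

variable {C : Type u} [Category.{v} C] [Preadditive C] [HasZeroObject C] [HasFiniteBiproducts C]
variable {S : PreExt C}

open PreExt

/-- Add a fixed summand `Z` to every object of a chain. -/
def PreExt.FChain.addZ {t : ℕ} (c : S.FChain t) {Z : C} {u : Z ⟶ Z} {v : Z ⟶ (0 : C)}
    {δz : S.Ext (0 : C) Z} (hz : S.IsExtriangle u v δz) (hS : S.IsET) : S.FChain t where
  obj := fun i => Z ⊞ c.obj i
  factor := fun i => (0 : C) ⊞ c.factor i
  f := fun i => biprod.map u (c.f i)
  g := fun i => biprod.map v (c.g i)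
  δ := fun i => S.sumExt δz (c.δ i)
  ext := fun i => hS.realize_sum hz (c.ext i)

lemma PreExt.FChain.cons_obj_last {t : ℕ} (c : S.FChain t) {N F : C} (f₀ : N ⟶ c.obj 0)
    (g₀ : c.obj 0 ⟶ F) (δ₀ : S.Ext F N) (h₀ : S.IsExtriangle f₀ g₀ δ₀) :
    (c.cons f₀ g₀ δ₀ h₀).obj (Fin.last (t + 1)) = c.obj (Fin.last t) := rfl

/-- Every object isomorphic to another admits "the same" inflation series data. -/
lemma aux_isoH (hS : S.IsET) {X Y : C} (e : X ≅ Y) : S.HaveIsoInflSeries X Y := by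
  by_cases hX : IsZero X
  · refine ⟨0, FChain.nil S X, FChain.nil S Y, ⟨hX, rfl, fun i => i.elim0⟩,
      ⟨hX.of_iso e.symm, rfl, fun i => i.elim0⟩, Equiv.refl _, fun i => i.elim0⟩
  · obtain ⟨fx, gx, δx, hx⟩ := aux_exists_zero_ext S hS X
    obtain ⟨fy, gy, δy, hy⟩ := aux_exists_zero_ext S hS Y
    refine ⟨1, (FChain.nil S X).cons fx gx δx hx, (FChain.nil S Y).cons fy gy δy hy,
      ⟨isZero_zero C, rfl, ?_⟩, ⟨isZero_zero C, rfl, ?_⟩, Equiv.refl _, ?_⟩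
    · intro i
      have : i = 0 := Subsingleton.elim _ _
      subst this
      exact hX
    · intro i
      have : i = 0 := Subsingleton.elim _ _
      subst this
      simpa using fun h => hX (h.of_iso e)
    · intro i
      have : i = 0 := Subsingleton.elim _ _
      subst this
      exact ⟨e⟩

/-- The key series comparison coming from an extriangle with non-zero ends. -/
lemma aux_ofH (hS : S.IsET) {A B X : C} {f : A ⟶ B} {g : B ⟶ X} {δ : S.Ext X A}
    (h : S.IsExtriangle f g δ) (hA : ¬ IsZero A) (hX : ¬ IsZero X) :
    S.HaveIsoInflSeries B (A ⊞ X) := by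
  obtain ⟨f₀, g₀, δ₀, h₀⟩ := aux_exists_zero_ext S hS A
  refine ⟨2, ((FChain.nil S B).cons f g δ h).cons f₀ g₀ δ₀ h₀,
    ((FChain.nil S (A ⊞ X)).cons biprod.inl biprod.snd 0 (hS.realize_zero A X)).cons f₀ g₀ δ₀ h₀,
    ⟨isZero_zero C, rfl, ?_⟩, ⟨isZero_zero C, rfl, ?_⟩, Equiv.refl _, ?_⟩ <;>
  · intro i
    match i with
    | ⟨0, _⟩ => first | exact hA | exact ⟨Iso.refl A⟩
    | ⟨1, _⟩ => first | exact hX | exact ⟨Iso.refl X⟩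

/-- Consing `0` onto a permutation of `Fin t`. -/
def auxConsPerm {t : ℕ} (e : Equiv.Perm (Fin t)) : Equiv.Perm (Fin (t + 1)) where
  toFun := Fin.cases 0 (fun j => (e j).succ)
  invFun := Fin.cases 0 (fun j => (e.symm j).succ)
  left_inv := by
    intro i
    induction i using Fin.cases <;> simp
  right_inv := by
    intro i
    induction i using Fin.cases <;> simp

lemma aux_addH (hS : S.IsET) {X Y : C} (Z : C) (hZ : ¬ IsZero Z)
    (h : S.HaveIsoInflSeries X Y) : S.HaveIsoInflSeries (Z ⊞ X) (Z ⊞ Y) := by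
  obtain ⟨t, c, d, ⟨hc0, hcl, hcf⟩, ⟨hd0, hdl, hdf⟩, e, hiso⟩ := h
  obtain ⟨u, v, δz, hz⟩ := aux_exists_ext_zero S hS Z
  obtain ⟨fc, gc, δc, hc'⟩ := aux_exists_zero_ext S hS (Z ⊞ c.obj 0)
  obtain ⟨fd, gd, δd, hd'⟩ := aux_exists_zero_ext S hS (Z ⊞ d.obj 0)
  refine ⟨t + 1, (c.addZ hz hS).cons fc gc δc hc', (d.addZ hz hS).cons fd gd δd hd',
    ⟨isZero_zero C, ?_, ?_⟩, ⟨isZero_zero C, ?_, ?_⟩, auxConsPerm e, ?_⟩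
  · show (Z ⊞ c.obj (Fin.last t)) = (Z ⊞ X)
    rw [hcl]
  · intro i
    induction i using Fin.cases with
    | zero =>
      show ¬ IsZero (Z ⊞ c.obj 0)
      exact aux_notZero_biprod_left hZ _
    | succ j =>
      show ¬ IsZero ((0 : C) ⊞ c.factor j)
      intro hzero
      exact hcf j (IsZero.of_iso hzero (auxIsoL (isZero_zero C) _).symm)
  · show (Z ⊞ d.obj (Fin.last t)) = (Z ⊞ Y)
    rw [hdl]
  · intro i
    induction i using Fin.cases with
    | zero =>
      show ¬ IsZero (Z ⊞ d.obj 0)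
      exact aux_notZero_biprod_left hZ _
    | succ j =>
      show ¬ IsZero ((0 : C) ⊞ d.factor j)
      intro hzero
      exact hdf j (IsZero.of_iso hzero (auxIsoL (isZero_zero C) _).symm)
  · intro i
    induction i using Fin.cases with
    | zero =>
      show Nonempty ((Z ⊞ c.obj 0) ≅ _)
      have h0 : (auxConsPerm e) 0 = 0 := rfl
      rw [h0]
      exact ⟨biprod.mapIso (Iso.refl Z) (hc0.iso hd0)⟩
    | succ j =>
      have hsucc : (auxConsPerm e) j.succ = (e j).succ := by
        show Fin.cases (motive := fun _ => Fin (t+1)) 0 (fun j => (e j).succ) j.succ = (e j).succ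
        simp
      rw [hsucc]
      show Nonempty (((0 : C) ⊞ c.factor j) ≅ ((0 : C) ⊞ d.factor (e j)))
      exact (hiso j).map fun α => biprod.mapIso (Iso.refl _) α

lemma aux_symmH {X Y : C} (h : S.HaveIsoInflSeries X Y) : S.HaveIsoInflSeries Y X := by
  obtain ⟨t, c, d, hc, hd, e, hiso⟩ := h
  refine ⟨t, d, c, hd, hc, e.symm, fun i => ?_⟩
  have := hiso (e.symm i)
  rw [e.apply_symm_apply] at this
  exact this.map Iso.symm

end Aux2
noncomputable section Aux3
set_option linter.unusedSectionVars false

variable {C : Type u} [Category.{v} C] [Preadditive C] [HasZeroObject C] [HasFiniteBiproducts C]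
variable {S : PreExt C}

open PreExt

lemma aux_isZero_biproduct_empty (v : Fin 0 → C) : IsZero (⨁ v) := by
  rw [IsZero.iff_id_eq_zero]
  apply biproduct.hom_ext
  intro j
  exact j.elim0

/-- Splitting off the last summand of a biproduct over `Fin (n+1)`. -/
def auxSnocIso {n : ℕ} (v : Fin (n + 1) → C) :
    (⨁ v) ≅ (⨁ (v ∘ Fin.castSucc)) ⊞ v (Fin.last n) where
  hom := biprod.lift (biproduct.lift fun i => biproduct.π v i.castSucc)
    (biproduct.π v (Fin.last n))
  inv := biprod.desc (biproduct.desc fun i => biproduct.ι v i.castSucc)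
    (biproduct.ι v (Fin.last n))
  hom_inv_id := by
    rw [biprod.lift_desc, biproduct.lift_desc, ← biproduct.total, Fin.sum_univ_castSucc]
  inv_hom_id := by
    ext
    all_goals simp [biproduct.ι_π]
    all_goals intro h
    · exact absurd h (Fin.castSucc_lt_last _).ne'

/-- The chain obtained by forgetting the last step. -/
def PreExt.FChain.init {t : ℕ} (c : S.FChain (t + 1)) : S.FChain t where
  obj := c.obj ∘ Fin.castSucc
  factor := c.factor ∘ Fin.castSucc
  f := fun i => c.f i.castSucc
  g := fun i => c.g i.castSucc
  δ := fun i => c.δ i.castSucc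
  ext := fun i => c.ext i.castSucc

/-- Traversing a filtration in the Grothendieck monoid. -/
lemma aux_monrel_chain : ∀ {t : ℕ} (c : S.FChain t), IsZero (c.obj 0) →
    MonRel S (c.obj (Fin.last t)) (⨁ c.factor)
  | 0, c, h0 => MonRel.iso (h0.iso (aux_isZero_biproduct_empty c.factor))
  | (t+1), c, h0 => by
    have h1 : MonRel S (c.obj (Fin.last (t+1)))
        (c.obj ((Fin.last t).castSucc) ⊞ c.factor (Fin.last t)) :=
      MonRel.of (c.ext (Fin.last t))
    have h2 : MonRel S (c.init.obj (Fin.last t)) (⨁ c.init.factor) :=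
      aux_monrel_chain c.init h0
    have h3 := MonRel.add (c.factor (Fin.last t)) h2
    have h4 : MonRel S ((⨁ (c.factor ∘ Fin.castSucc)) ⊞ c.factor (Fin.last t))
        (⨁ c.factor) := MonRel.iso (auxSnocIso c.factor).symm
    exact h1.trans (h3.trans h4)

lemma aux_monrel_of_H (hS : S.IsET) {X Y : C} (h : S.HaveIsoInflSeries X Y) : MonRel S X Y := by
  obtain ⟨t, c, d, ⟨hc0, hcl, _⟩, ⟨hd0, hdl, _⟩, e, hiso⟩ := h
  have m1 : MonRel S X (⨁ c.factor) := hcl ▸ aux_monrel_chain c hc0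
  have m3 : MonRel S Y (⨁ d.factor) := hdl ▸ aux_monrel_chain d hd0
  have m2 : MonRel S (⨁ c.factor) (⨁ d.factor) :=
    MonRel.iso (biproduct.whiskerEquiv e fun j => ((hiso j).some).symm)
  exact (m1.trans m2).trans m3.symm
end Aux3
noncomputable section Aux4
set_option linter.unusedSectionVars false

variable {C : Type u} [Category.{v} C] [Preadditive C] [HasZeroObject C] [HasFiniteBiproducts C]
variable {S : PreExt C}

open PreExt

lemma aux_rtg_of_chain : ∀ (n : ℕ) (A : Fin (n + 1) → C),
    (∀ i : Fin n, S.HaveIsoInflSeries (A i.castSucc) (A i.succ)) →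
    Relation.ReflTransGen S.HaveIsoInflSeries (A 0) (A (Fin.last n))
  | 0, A, _ => Relation.ReflTransGen.refl
  | (n+1), A, hstep => by
    have ih := aux_rtg_of_chain n (A ∘ Fin.castSucc) (fun i => hstep i.castSucc)
    exact ih.tail (hstep (Fin.last n))

lemma aux_chain_of_rtg {M M' : C} (h : Relation.ReflTransGen S.HaveIsoInflSeries M M') :
    ∃ (n : ℕ) (A : Fin (n + 1) → C), A 0 = M ∧ A (Fin.last n) = M' ∧
      ∀ i : Fin n, S.HaveIsoInflSeries (A i.castSucc) (A i.succ) := by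
  induction h with
  | refl => exact ⟨0, fun _ => M, rfl, rfl, fun i => i.elim0⟩
  | @tail Y M' hMY hY ih =>
    obtain ⟨n, A, h0, hl, hstep⟩ := ih
    refine ⟨n + 1, Fin.snoc A M', ?_, ?_, ?_⟩
    · rw [show (0 : Fin (n + 2)) = Fin.castSucc 0 from rfl, Fin.snoc_castSucc]
      exact h0
    · simp
    · intro i
      induction i using Fin.lastCases with
      | last =>
        rw [show (Fin.last n).succ = Fin.last (n + 1) from rfl]
        simp only [Fin.snoc_castSucc, Fin.snoc_last]
        rw [hl]
        exact hY
      | cast j =>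
        rw [show (j.castSucc).succ = (j.succ).castSucc from rfl]
        simp only [Fin.snoc_castSucc]
        exact hstep j

lemma aux_forward (hS : S.IsET) {M M' : C} (h : MonRel S M M') :
    Relation.ReflTransGen S.HaveIsoInflSeries M M' := by
  induction h with
  | @of A B X f g δ hE =>
    by_cases hA : IsZero A
    · have hδ : δ = 0 := aux_delta_zero_of_src S hS hA hE
      obtain ⟨e, -, -⟩ := hS.realize_unique (hδ ▸ hE) (hS.realize_zero A X)
      exact Relation.ReflTransGen.single (aux_isoH hS e)
    · by_cases hX : IsZero X
      · have hδ : δ = 0 := aux_delta_zero_of_tgt S hS hX hE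
        obtain ⟨e, -, -⟩ := hS.realize_unique (hδ ▸ hE) (hS.realize_zero A X)
        exact Relation.ReflTransGen.single (aux_isoH hS e)
      · exact Relation.ReflTransGen.single (aux_ofH hS hE hA hX)
  | iso e => exact Relation.ReflTransGen.single (aux_isoH hS e)
  | symm _ ih =>
    haveI : Std.Symm S.HaveIsoInflSeries := ⟨fun _ _ hxy => aux_symmH hxy⟩
    exact Std.Symm.symm _ _ ih
  | trans _ _ ih1 ih2 => exact ih1.trans ih2
  | @add X Y Z hXY ih =>
    clear hXY
    by_cases hZ : IsZero Z
    · have e1 : (X ⊞ Z) ≅ X := auxIsoR hZ X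
      have e2 : Y ≅ (Y ⊞ Z) := (auxIsoR hZ Y).symm
      exact ((Relation.ReflTransGen.single (aux_isoH hS e1)).trans ih).trans
        (Relation.ReflTransGen.single (aux_isoH hS e2))
    · have key : ∀ P Q : C, S.HaveIsoInflSeries P Q →
          Relation.ReflTransGen S.HaveIsoInflSeries (P ⊞ Z) (Q ⊞ Z) := by
        intro P Q hPQ
        exact ((Relation.ReflTransGen.single (aux_isoH hS (biprod.braiding P Z))).trans
          (Relation.ReflTransGen.single (aux_addH hS Z hZ hPQ))).trans
          (Relation.ReflTransGen.single (aux_isoH hS (biprod.braiding Z Q)))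
      induction ih with
      | refl => exact Relation.ReflTransGen.refl
      | tail _ hH ihh => exact ihh.trans (key _ _ hH)

lemma aux_backward (hS : S.IsET) {M M' : C}
    (h : Relation.ReflTransGen S.HaveIsoInflSeries M M') : MonRel S M M' := by
  induction h with
  | refl => exact MonRel.iso (Iso.refl M)
  | tail _ hH ih => exact ih.trans (aux_monrel_of_H hS hH)

end Aux4
section Statements

variable {C : Type u} [Category.{v} C] [Preadditive C] [HasZeroObject C] [HasFiniteBiproducts C]

theorem stmt8 (S : PreExt C) (hS : S.IsET) [EssentiallySmall.{v} C] (M M' : C) :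
    MonRel S M M' ↔
      ∃ (n : ℕ) (A : Fin (n + 1) → C), A 0 = M ∧ A (Fin.last n) = M' ∧
        ∀ i : Fin n, S.HaveIsoInflSeries (A i.castSucc) (A i.succ) := by
  constructor
  · intro h
    exact aux_chain_of_rtg (aux_forward hS h)
  · rintro ⟨n, A, h0, hl, hstep⟩
    exact aux_backward hS (h0 ▸ hl ▸ aux_rtg_of_chain n A hstep)

end Statements

end ExtriPaper
end

section
/- Let R be a commutative artinian ring, let (A, E, s) be an artin R-linear extriangulated category, and let Φ = {Φ_1, …, Φ_n} be an E-stratifying system. Then for each object X of A there exists an extriangle A → B → X ⇢η with A ∈ F(Φ) and B ∈ P(Φ), where P(Φ) := {Z ∈ A : E(Z, Y) = 0 for all Y ∈ F(Φ)}. In particular, the extriangulated category (F(Φ), E|F(Φ), s|F(Φ)) has enough E|F(Φ)-projectives. -/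
/-!
Common axiomatic framework: extriangulated categories in the sense of Nakaoka–Palu,
formalised as a biadditive functor `E` together with a realisation predicate
`IsExtriangle` subject to the axioms (ET1)–(ET4), (ET3)ᵒᵖ, (ET4)ᵒᵖ.
-/

open CategoryTheory CategoryTheory.Limits ZeroObject

attribute [local instance] CategoryTheory.Limits.hasBinaryBiproducts_of_finite_biproducts

universe v u

namespace ExtriPaper

section Aux

namespace PreExt

variable {C : Type u} [Category.{v} C] [Preadditive C] (S : PreExt C)
variable [HasZeroObject C] [HasFiniteBiproducts C]

set_option linter.unusedSectionVars false

@[simp] lemma push_id {X A : C} (δ : S.Ext X A) : S.push (𝟙 A) δ = δ := by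
  simp [push]

@[simp] lemma pull_id {X A : C} (δ : S.Ext X A) : S.pull (𝟙 X) δ = δ := by
  simp [pull]

lemma push_comp {X A A' A'' : C} (a : A ⟶ A') (b : A' ⟶ A'') (δ : S.Ext X A) :
    S.push (a ≫ b) δ = S.push b (S.push a δ) := by
  simp [push, CategoryTheory.comp_apply]

lemma pull_comp {X'' X' X A : C} (c : X'' ⟶ X') (d : X' ⟶ X) (δ : S.Ext X A) :
    S.pull (c ≫ d) δ = S.pull c (S.pull d δ) := by
  have : (c ≫ d).op = d.op ≫ c.op := rfl
  simp only [pull, this, Functor.map_comp, NatTrans.comp_app]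
  exact CategoryTheory.comp_apply _ _ _

lemma push_pull {X' X A A' : C} (a : A ⟶ A') (c : X' ⟶ X) (δ : S.Ext X A) :
    S.push a (S.pull c δ) = S.pull c (S.push a δ) := by
  have h := congrArg (fun φ : ((S.E.obj (Opposite.op X)).obj A ⟶ (S.E.obj (Opposite.op X')).obj A') => φ δ)
    ((S.E.map c.op).naturality a)
  simp only [CategoryTheory.comp_apply] at h
  exact h.symm

@[simp] lemma push_zero_ext {X A A' : C} (a : A ⟶ A') : S.push a (0 : S.Ext X A) = 0 :=
  map_zero _

@[simp] lemma pull_zero_ext {X' X A : C} (c : X' ⟶ X) : S.pull c (0 : S.Ext X A) = 0 :=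
  map_zero _

lemma push_add_ext {X A A' : C} (a : A ⟶ A') (δ ε : S.Ext X A) :
    S.push a (δ + ε) = S.push a δ + S.push a ε := map_add _ δ ε

lemma pull_add_ext {X' X A : C} (c : X' ⟶ X) (δ ε : S.Ext X A) :
    S.pull c (δ + ε) = S.pull c δ + S.pull c ε := map_add _ δ ε

variable {S}

lemma push_zero_mor (hS : S.IsET) {X A A' : C} (δ : S.Ext X A) :
    S.push (0 : A ⟶ A') δ = 0 := by
  have h := hS.push_add (0 : A ⟶ A') 0 δ
  rw [add_zero] at h
  exact (left_eq_add.mp h)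

lemma pull_zero_mor (hS : S.IsET) {X' X A : C} (δ : S.Ext X A) :
    S.pull (0 : X' ⟶ X) δ = 0 := by
  have h := hS.pull_add (0 : X' ⟶ X) 0 δ
  rw [add_zero] at h
  exact (left_eq_add.mp h)

lemma ext_zero_of_isZero_fst (hS : S.IsET) {X A : C} (h : IsZero X) (δ : S.Ext X A) :
    δ = 0 := by
  have hz : (𝟙 X) = (0 : X ⟶ X) := h.eq_of_src _ _
  rw [← S.pull_id δ, hz, pull_zero_mor hS]

lemma ext_zero_of_isZero_snd (hS : S.IsET) {X A : C} (h : IsZero A) (δ : S.Ext X A) :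
    δ = 0 := by
  have hz : (𝟙 A) = (0 : A ⟶ A) := h.eq_of_src _ _
  rw [← S.push_id δ, hz, push_zero_mor hS]

/-- The pullback of an extension along its own deflation vanishes. -/
lemma pull_deflation_zero (hS : S.IsET) {A B X : C} {f : A ⟶ B} {g : B ⟶ X}
    {δ : S.Ext X A} (h : S.IsExtriangle f g δ) : S.pull g δ = 0 := by
  obtain ⟨a, -, ha⟩ := hS.et3op (hS.realize_zero A B) h (biprod.snd : A ⊞ B ⟶ B) g rfl
  rw [← ha, push_zero_ext]

/-- Realizations of the zero extension split. -/
lemma split_of_realize_zero (hS : S.IsET) {A B X : C} {f : A ⟶ B} {g : B ⟶ X}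
    (h : S.IsExtriangle f g (0 : S.Ext X A)) :
    ∃ j : B ≅ A ⊞ X, f ≫ j.hom = biprod.inl ∧ j.hom ≫ biprod.snd = g :=
  hS.realize_unique h (hS.realize_zero A X)

/-- Exactness of `E(-, Y)` at the middle term. -/
lemma exact_pull (hS : S.IsET) {A B X Y : C} {f : A ⟶ B} {g : B ⟶ X} {δ : S.Ext X A}
    (h : S.IsExtriangle f g δ) (ε : S.Ext B Y) (hε : S.pull f ε = 0) :
    ∃ ε' : S.Ext X Y, S.pull g ε' = ε := by
  obtain ⟨M, u, v, hM⟩ := hS.realize_exists ε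
  obtain ⟨E₀, h', d, e, δ'', hx1, hx2, k1, k2, c1, c2⟩ := hS.et4op h hM
  rw [hε] at hx2
  obtain ⟨j, hj1, hj2⟩ := split_of_realize_zero hS hx2
  refine ⟨S.push (j.hom ≫ biprod.fst) δ'', ?_⟩
  rw [← push_pull, k2, ← S.push_comp]
  have he : e ≫ j.hom ≫ biprod.fst = 𝟙 Y := by
    rw [← Category.assoc, hj1, biprod.inl_fst]
  rw [he, S.push_id]

/-- Exactness of `E(W, -)` at the middle term. -/
lemma exact_push (hS : S.IsET) {A B X W : C} {f : A ⟶ B} {g : B ⟶ X} {δ : S.Ext X A}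
    (h : S.IsExtriangle f g δ) (ε : S.Ext W B) (hε : S.push g ε = 0) :
    ∃ ε₀ : S.Ext W A, S.push f ε₀ = ε := by
  obtain ⟨M, u, v, hM⟩ := hS.realize_exists ε
  obtain ⟨E₀, h', d, e, δ'', hx1, hx2, k1, k2, c1, c2⟩ := hS.et4 h hM
  rw [hε] at hx2
  obtain ⟨j, hj1, hj2⟩ := split_of_realize_zero hS hx2
  refine ⟨S.pull (biprod.inr ≫ j.inv) δ'', ?_⟩
  rw [push_pull, k2, ← S.pull_comp]
  have he : (biprod.inr ≫ j.inv) ≫ e = 𝟙 W := by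
    rw [← hj2]; simp
  rw [he, S.pull_id]

/-- Inductive characterisation of `P`-filtered objects. -/
inductive FiltR (S : PreExt C) (P : Set C) : C → Prop
  | zero {Z : C} (h : IsZero Z) : FiltR S P Z
  | step {A B X : C} (f : A ⟶ B) (g : B ⟶ X) (δ : S.Ext X A) (hA : FiltR S P A)
      (hX : X ∈ P) (hx : S.IsExtriangle f g δ) : FiltR S P B

lemma FiltR.of_iso (hS : S.IsET) {P : Set C} {M M' : C} (h : FiltR S P M) (e : M ≅ M') :
    FiltR S P M' := by
  induction h generalizing M' with
  | zero hz => exact FiltR.zero (hz.of_iso e.symm)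
  | step f g δ hA hX hx ih =>
    exact FiltR.step (f ≫ e.hom) (e.inv ≫ g) δ hA hX (hS.realize_iso e hx)

/-- `F(P)` is closed under extensions. -/
lemma FiltR.ext_closed (hS : S.IsET) {P : Set C} {V : C} (hV : FiltR S P V) :
    ∀ {U B : C} (f : U ⟶ B) (g : B ⟶ V) (δ : S.Ext V U),
      S.IsExtriangle f g δ → FiltR S P U → FiltR S P B := by
  induction hV with
  | @zero Z hz =>
    intro U B f g δ hx hU
    have hδ : δ = 0 := ext_zero_of_isZero_fst hS hz δ
    rw [hδ] at hx
    obtain ⟨j, hj1, hj2⟩ := split_of_realize_zero hS hx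
    have e2 : U ⊞ Z ≅ U := by
      refine ⟨biprod.fst, biprod.inl, ?_, biprod.inl_fst⟩
      apply biprod.hom_ext
      · simp
      · apply hz.eq_of_tgt
    exact hU.of_iso hS (e2.symm ≪≫ j.symm)
  | @step Vp V Z v w θ hVp hZ hxV ih =>
    intro U B f g δ hx hU
    obtain ⟨E₀, h', d, e, δ'', hx1, hx2, k1, k2, c1, c2⟩ := hS.et4op hxV hx
    exact FiltR.step h' (g ≫ w) δ'' (ih e d _ hx2 hU) hZ hx1

lemma filt_to_filtR {P : Set C} {M : C} (h : M ∈ S.Filt P) : FiltR S P M := by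
  obtain ⟨t, c, h0, hlast, hfac⟩ := h
  have key : ∀ i : Fin (t + 1), FiltR S P (c.obj i) := by
    intro i
    induction i using Fin.induction with
    | zero => exact FiltR.zero h0
    | succ i ih => exact FiltR.step (c.f i) (c.g i) (c.δ i) ih (hfac i) (c.ext i)
  exact hlast ▸ key (Fin.last t)

lemma isExtriangle_eqToHom {A A' B B' X X' : C} (hA : A = A') (hB : B = B')
    (hX : X = X') {f : A ⟶ B} {g : B ⟶ X} {δ : S.Ext X A} (hx : S.IsExtriangle f g δ) :
    S.IsExtriangle (eqToHom hA.symm ≫ f ≫ eqToHom hB) (eqToHom hB.symm ≫ g ≫ eqToHom hX)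
      (cast (by rw [hA, hX]) δ) := by
  subst hA; subst hB; subst hX
  simpa using hx

lemma filtR_to_filt {P : Set C} {M : C} (h : FiltR S P M) : M ∈ S.Filt P := by
  induction h with
  | zero hz =>
    exact ⟨0, ⟨fun _ => _, Fin.elim0, fun i => i.elim0, fun i => i.elim0, fun i => i.elim0,
      fun i => i.elim0⟩, hz, rfl, fun i => i.elim0⟩
  | @step A B X f g δ hA hX hx ih =>
    obtain ⟨t, c, h0, hlast, hfac⟩ := ih
    subst hlast
    refine ⟨t + 1, ?_, ?_, ?_, ?_⟩
    · refine
        { obj := Fin.snoc c.obj B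
          factor := Fin.snoc c.factor X
          f := fun i => Fin.lastCases (motive := fun i =>
              Fin.snoc (α := fun _ => C) c.obj B i.castSucc ⟶ Fin.snoc (α := fun _ => C) c.obj B i.succ)
            (eqToHom (by simp) ≫ f ≫ eqToHom (by rw [Fin.succ_last]; simp)) (fun j =>
              eqToHom (by simp) ≫ c.f j ≫ eqToHom (by rw [Fin.succ_castSucc, Fin.snoc_castSucc])) i
          g := fun i => Fin.lastCases (motive := fun i =>
              Fin.snoc (α := fun _ => C) c.obj B i.succ ⟶ Fin.snoc (α := fun _ => C) c.factor X i)
            (eqToHom (by rw [Fin.succ_last]; simp) ≫ g ≫ eqToHom (by simp))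
            (fun j => eqToHom (by rw [Fin.succ_castSucc, Fin.snoc_castSucc]) ≫ c.g j ≫ eqToHom (by simp)) i
          δ := fun i => Fin.lastCases (motive := fun i =>
              S.Ext (Fin.snoc (α := fun _ => C) c.factor X i) (Fin.snoc (α := fun _ => C) c.obj B i.castSucc))
            (cast (by simp) δ)
            (fun j => cast (by simp) (c.δ j)) i
          ext := ?_ }
      intro i
      induction i using Fin.lastCases with
      | last =>
        simp only [Fin.lastCases_last]
        exact isExtriangle_eqToHom (by simp) (by rw [Fin.succ_last]; simp) (by simp) hx
      | cast j =>
        simp only [Fin.lastCases_castSucc]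
        exact isExtriangle_eqToHom (by simp) (by rw [Fin.succ_castSucc, Fin.snoc_castSucc]) (by simp) (c.ext j)
    · have e : Fin.snoc (α := fun _ => C) c.obj B 0 = c.obj 0 := by
        rw [← Fin.castSucc_zero, Fin.snoc_castSucc]
      show IsZero (Fin.snoc (α := fun _ => C) c.obj B 0)
      rw [e]; exact h0
    · simp
    · intro i
      induction i using Fin.lastCases with
      | last => simpa using hX
      | cast j => simpa using hfac j

end PreExt

end Aux



section Aux2

namespace PreExt

variable {C : Type u} [Category.{v} C] [Preadditive C] {S : PreExt C}
variable [HasZeroObject C] [HasFiniteBiproducts C]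

set_option linter.unusedSectionVars false

/-- The `m`-fold direct sum `W^m`, built from binary biproducts. -/
noncomputable def powObj (W : C) : ℕ → C
  | 0 => 0
  | m + 1 => powObj W m ⊞ W

lemma filtR_pow {P : Set C} {W : C} (hW : W ∈ P) (hS : S.IsET) (m : ℕ) :
    FiltR S P (powObj W m) := by
  induction m with
  | zero => exact FiltR.zero (isZero_zero C)
  | succ m ih =>
    exact FiltR.step biprod.inl biprod.snd 0 ih hW (hS.realize_zero (powObj W m) W)

lemma ext_pow_vanish (hS : S.IsET) {W Y : C} (hW : ∀ ε : S.Ext W Y, ε = 0) (m : ℕ) :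
    ∀ ε : S.Ext (powObj W m) Y, ε = 0 := by
  induction m with
  | zero => exact fun ε => ext_zero_of_isZero_fst hS (isZero_zero C) ε
  | succ m ih =>
    intro (ε : S.Ext (powObj W m ⊞ W) Y)
    have htot := biprod.total (X := powObj W m) (Y := W)
    calc ε = S.pull (𝟙 (powObj W m ⊞ W)) ε := (S.pull_id ε).symm
    _ = S.pull (biprod.fst ≫ biprod.inl + biprod.snd ≫ biprod.inr) ε := by rw [htot]
    _ = 0 := by
        rw [hS.pull_add, S.pull_comp, S.pull_comp, ih (S.pull biprod.inl ε),
          hW (S.pull biprod.inr ε), pull_zero_ext, pull_zero_ext, add_zero]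

/-- The universal extension attached to a finite family of extensions. -/
noncomputable def univExt (S : PreExt C) {X W : C} :
    ∀ m, (Fin m → S.Ext X W) → S.Ext X (powObj W m)
  | 0, _ => 0
  | m + 1, v =>
      S.push biprod.inl (univExt S m (v ∘ Fin.castSucc)) + S.push biprod.inr (v (Fin.last m))

variable {R : Type*} [CommRing R] [CategoryTheory.Linear R C]

lemma univExt_spec (hS : S.IsET) (art : ArtinLinear R S) {X W : C} (m : ℕ)
    (v : Fin m → S.Ext X W) (r : Fin m → R) :
    ∃ h : powObj W m ⟶ W, S.push h (univExt S m v) =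
      (letI := art.module X W; ∑ i, r i • v i) := by
  induction m with
  | zero => exact ⟨0, by simp [univExt]⟩
  | succ m ih =>
    obtain ⟨h₀, hh₀⟩ := ih (v ∘ Fin.castSucc) (r ∘ Fin.castSucc)
    letI := art.module X W
    refine ⟨biprod.desc h₀ (r (Fin.last m) • 𝟙 W), ?_⟩
    rw [univExt]
    change S.push (A := powObj W m ⊞ W) (biprod.desc h₀ (r (Fin.last m) • 𝟙 W))
      (S.push biprod.inl (univExt S m (v ∘ Fin.castSucc)) + S.push biprod.inr (v (Fin.last m))) = _
    rw [S.push_add_ext, ← S.push_comp, ← S.push_comp, biprod.inl_desc, biprod.inr_desc,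
      hh₀, art.push_smul, S.push_id, Fin.sum_univ_castSucc]
    rfl

lemma exists_gens (art : ArtinLinear R S) (X W : C) :
    ∃ (m : ℕ) (v : Fin m → S.Ext X W), ∀ ε : S.Ext X W,
      ∃ r : Fin m → R, (letI := art.module X W; ∑ i, r i • v i) = ε := by
  letI := art.module X W
  have hfl := art.extFinite X W
  haveI hnoeth : IsNoetherian R (S.Ext X W) :=
    (isFiniteLength_iff_isNoetherian_isArtinian.mp hfl).1
  obtain ⟨m, v, hv⟩ :=
    Submodule.fg_iff_exists_fin_generating_family.mp
      (IsNoetherian.noetherian (⊤ : Submodule R (S.Ext X W)))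
  refine ⟨m, v, fun ε => ?_⟩
  have hmem : ε ∈ Submodule.span R (Set.range v) := by rw [hv]; trivial
  exact (Submodule.mem_span_range_iff_exists_fun R).mp hmem

lemma ext_vanish_of_filtR (hS : S.IsET) {P : Set C} {B Y : C}
    (hB : ∀ Y' ∈ P, ∀ ε : S.Ext B Y', ε = 0) (hY : FiltR S P Y) :
    ∀ ε : S.Ext B Y, ε = 0 := by
  induction hY with
  | zero hz => exact fun ε => ext_zero_of_isZero_snd hS hz ε
  | @step A' Y' Xf f g δ hA hX hx ih =>
    intro ε
    have h1 : S.push g ε = 0 := hB _ hX _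
    obtain ⟨ε₀, hε₀⟩ := exact_push hS hx ε h1
    rw [ih ε₀] at hε₀
    rw [← hε₀, push_zero_ext]

lemma main_step (hS : S.IsET) (art : ArtinLinear R S) {n : ℕ} (Φ : Fin n → C)
    (hΦ : IsStratSys S Φ) (k : ℕ) : k ≤ n → ∀ X : C,
    ∃ (A B : C) (f : A ⟶ B) (g : B ⟶ X) (η : S.Ext X A),
      FiltR S (Set.range Φ) A ∧
      (∀ j : Fin n, (j : ℕ) < k → ∀ ε : S.Ext B (Φ j), ε = 0) ∧
      S.IsExtriangle f g η := by
  induction k with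
  | zero =>
    intro _ X
    exact ⟨(0 : C), (0 : C) ⊞ X, biprod.inl, biprod.snd, 0, FiltR.zero (isZero_zero C),
      fun j hj => (Nat.not_lt_zero _ hj).elim, hS.realize_zero (0 : C) X⟩
  | succ k ih =>
    intro hk X
    have hkn : k < n := Nat.lt_of_succ_le hk
    obtain ⟨A', B', f', g', η', hA', hvan, hx'⟩ := ih (le_of_lt hkn) X
    set W := Φ ⟨k, hkn⟩ with hW
    obtain ⟨m, v, hv⟩ := exists_gens art B' W
    obtain ⟨B, e, p, hB⟩ := hS.realize_exists (univExt S m v)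
    obtain ⟨E₀, h, d, eo, δ'', hx1, hx2, k1, k2, c1, c2⟩ := hS.et4op hx' hB
    refine ⟨E₀, B, h, p ≫ g', δ'', ?_, ?_, hx1⟩
    · exact FiltR.ext_closed hS hA' eo d _ hx2 (filtR_pow (P := Set.range Φ) (W := W) ⟨⟨k, hkn⟩, hW.symm⟩ hS m)
    · intro j hj ε
      have hWj : ∀ ε' : S.Ext W (Φ j), ε' = 0 := fun ε' =>
        hΦ.s2 j ⟨k, hkn⟩ (by simpa [Fin.le_def] using Nat.lt_succ_iff.mp hj) ε'
      have hpow : S.pull e ε = 0 := ext_pow_vanish hS hWj m _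
      obtain ⟨ε', hε'⟩ := exact_pull hS hB ε hpow
      rcases Nat.lt_or_ge (j : ℕ) k with hlt | hge
      · rw [hvan j hlt ε'] at hε'
        rw [← hε', pull_zero_ext]
      · have hjk : j = ⟨k, hkn⟩ := Fin.ext (le_antisymm (Nat.lt_succ_iff.mp hj) hge)
        subst hjk
        obtain ⟨r, hr⟩ := hv ε'
        obtain ⟨h', hh'⟩ := univExt_spec hS art m v r
        rw [hr] at hh'
        have hp0 : S.pull p (univExt S m v) = 0 := pull_deflation_zero hS hB
        rw [← hε', ← hh', ← push_pull, hp0, push_zero_ext]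

end PreExt

end Aux2


section Statements

variable {C : Type u} [Category.{v} C] [Preadditive C] [HasZeroObject C] [HasFiniteBiproducts C]

variable (R : Type*) [CommRing R] [IsArtinianRing R] [CategoryTheory.Linear R C]
  [IsIdempotentComplete C]

theorem stmt14 (S : PreExt C) (hS : S.IsET) (art : ArtinLinear R S)
    {n : ℕ} (Φ : Fin n → C) (hΦ : IsStratSys S Φ) :
    (∀ X : C, ∃ (A B : C) (f : A ⟶ B) (g : B ⟶ X) (η : S.Ext X A),
      A ∈ S.Filt (Set.range Φ) ∧ B ∈ S.projSet (Set.range Φ) ∧ S.IsExtriangle f g η) ∧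
    (∀ X ∈ S.Filt (Set.range Φ), ∃ (A B : C) (f : A ⟶ B) (g : B ⟶ X) (η : S.Ext X A),
      A ∈ S.Filt (Set.range Φ) ∧ B ∈ S.Filt (Set.range Φ) ∧
      (∀ Y ∈ S.Filt (Set.range Φ), ∀ δ : S.Ext B Y, δ = 0) ∧ S.IsExtriangle f g η) := by
  have main : ∀ X : C, ∃ (A B : C) (f : A ⟶ B) (g : B ⟶ X) (η : S.Ext X A),
      PreExt.FiltR S (Set.range Φ) A ∧
      (∀ Y, PreExt.FiltR S (Set.range Φ) Y → ∀ ε : S.Ext B Y, ε = 0) ∧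
      S.IsExtriangle f g η := by
    intro X
    obtain ⟨A, B, f, g, η, hA, hvan, hx⟩ := PreExt.main_step hS art Φ hΦ n le_rfl X
    refine ⟨A, B, f, g, η, hA, ?_, hx⟩
    intro Y hY
    refine PreExt.ext_vanish_of_filtR hS ?_ hY
    rintro Y' ⟨j, rfl⟩ ε
    exact hvan j j.isLt ε
  constructor
  · intro X
    obtain ⟨A, B, f, g, η, hA, hvan, hx⟩ := main X
    exact ⟨A, B, f, g, η, PreExt.filtR_to_filt hA,
      fun Y hY δ => hvan Y (PreExt.filt_to_filtR hY) δ, hx⟩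
  · intro X hX
    obtain ⟨A, B, f, g, η, hA, hvan, hx⟩ := main X
    refine ⟨A, B, f, g, η, PreExt.filtR_to_filt hA, ?_,
      fun Y hY δ => hvan Y (PreExt.filt_to_filtR hY) δ, hx⟩
    exact PreExt.filtR_to_filt (PreExt.FiltR.ext_closed hS (PreExt.filt_to_filtR hX) f g η hx hA)

end Statements

end ExtriPaper
end

section
/- Let R be a commutative artinian ring, let (A, E, s) be an artin R-linear extriangulated category, and let (Φ, Q) = ({Φ_1, …, Φ_n}, {Q_1, …, Q_n}) be a projective E-stratifying system in (A, E, s). If i > j, then Hom_A(Q_i, Φ_j) = 0. -/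
/-!
Common axiomatic framework: extriangulated categories in the sense of Nakaoka–Palu,
formalised as a biadditive functor `E` together with a realisation predicate
`IsExtriangle` subject to the axioms (ET1)–(ET4), (ET3)ᵒᵖ, (ET4)ᵒᵖ.
-/

open CategoryTheory CategoryTheory.Limits ZeroObject

attribute [local instance] CategoryTheory.Limits.hasBinaryBiproducts_of_finite_biproducts

universe v u

namespace ExtriPaper

section Statements

variable {C : Type u} [Category.{v} C] [Preadditive C] [HasZeroObject C] [HasFiniteBiproducts C]

variable (R : Type*) [CommRing R] [IsArtinianRing R] [CategoryTheory.Linear R C]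
  [IsIdempotentComplete C]

/-- If `f ≫ φ = 0` for an extriangle `A →f B →g X`, then `φ` factors through `g`. -/
theorem factor_of_comp_zero (S : PreExt C) (hS : S.IsET) {A B X Y : C}
    {f : A ⟶ B} {g : B ⟶ X} {δ : S.Ext X A} (h : S.IsExtriangle f g δ)
    (φ : B ⟶ Y) (hφ : f ≫ φ = 0) : ∃ ψ : X ⟶ Y, g ≫ ψ = φ := by
  have hz := hS.realize_zero (0 : C) Y
  have heq : (biprod.snd : (0 : C) ⊞ Y ⟶ Y) ≫ biprod.inr = 𝟙 _ := by
    apply biprod.hom_ext'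
    · exact (isZero_zero C).eq_of_src _ _
    · simp
  let e : (0 : C) ⊞ Y ≅ Y := ⟨biprod.snd, biprod.inr, heq, by simp⟩
  have hz' := hS.realize_iso e hz
  obtain ⟨c, hc, -⟩ := hS.et3 h hz' 0 φ (by rw [hφ, zero_comp])
  refine ⟨c, ?_⟩
  simpa [e] using hc

/-- Maps from a `P`-filtered object to `Y` vanish if maps from `P` to `Y` vanish. -/
theorem filt_hom_zero (S : PreExt C) (hS : S.IsET) {P : Set C} {Y : C}
    (hP : ∀ Z ∈ P, ∀ φ : Z ⟶ Y, φ = 0) {M : C} (hM : M ∈ S.Filt P)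
    (φ : M ⟶ Y) : φ = 0 := by
  obtain ⟨t, c, h0, hlast, hfac⟩ := hM
  have key : ∀ i : Fin (t + 1), ∀ φ : c.obj i ⟶ Y, φ = 0 := by
    intro i
    induction i using Fin.induction with
    | zero => intro φ; exact h0.eq_of_src φ 0
    | succ i ih =>
      intro φ
      obtain ⟨ψ, hψ⟩ := factor_of_comp_zero S hS (c.ext i) φ (ih (c.f i ≫ φ))
      rw [← hψ, hP _ (hfac i) ψ, comp_zero]
  subst hlast
  exact key (Fin.last t) φ

theorem stmt16 (S : PreExt C) (hS : S.IsET) (art : ArtinLinear R S)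
    {n : ℕ} (Φ Q : Fin n → C) (hPQ : IsProjSS S Φ Q)
    (i j : Fin n) (hij : j < i) (φ : Q i ⟶ Φ j) : φ = 0 := by
  obtain ⟨hstrat, -, ⟨d⟩⟩ := hPQ
  have hk : d.k i ≫ φ = 0 :=
    filt_hom_zero S hS
      (by rintro Z ⟨l, hl, rfl⟩ ψ; exact hstrat.s1 j l (lt_trans hij hl) ψ)
      (d.kmem i) _
  obtain ⟨ψ, hψ⟩ := factor_of_comp_zero S hS (d.ext i) φ hk
  rw [← hψ, hstrat.s1 j i hij ψ, comp_zero]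

end Statements

end ExtriPaper
end

section
/- Let R be a commutative artinian ring, let (A, E, s) be an artin R-linear extriangulated category, and let (Φ, Q) = ({Φ_1, …, Φ_n}, {Q_1, …, Q_n}) be a minimal projective E-stratifying system, with chosen extriangles K_i → Q_i →q_i Φ_i ⇢η_i as in (PS2). If for each 1 ≤ i ≤ n the functor Hom_A(Q_i, −) is left exact on the extriangulated category (F(Φ), E|F(Φ), s|F(Φ)), then each q_i : Q_i → Φ_i is non-zero. -/
/-!
Common axiomatic framework: extriangulated categories in the sense of Nakaoka–Palu,
formalised as a biadditive functor `E` together with a realisation predicate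
`IsExtriangle` subject to the axioms (ET1)–(ET4), (ET3)ᵒᵖ, (ET4)ᵒᵖ.
-/

open CategoryTheory CategoryTheory.Limits ZeroObject

attribute [local instance] CategoryTheory.Limits.hasBinaryBiproducts_of_finite_biproducts

universe v u

namespace ExtriPaper

section Statements

variable {C : Type u} [Category.{v} C] [Preadditive C] [HasZeroObject C] [HasFiniteBiproducts C]

variable (R : Type*) [CommRing R] [IsArtinianRing R] [CategoryTheory.Linear R C]
  [IsIdempotentComplete C]

/-- Extensions with zero first argument vanish. -/
lemma aux_ext_eq_zero_of_isZero {S : PreExt C} (hS : S.IsET) {A X : C} (hA : IsZero A)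
    (δ : S.Ext X A) : δ = 0 := by
  have h0 : S.push (0 : A ⟶ A) δ = 0 := by
    have h := hS.push_add (0 : A ⟶ A) 0 δ
    rw [add_zero] at h
    exact (left_eq_add.mp h)
  have h1 : δ = S.push (𝟙 A) δ := by
    simp [PreExt.push]
  rw [h1, hA.eq_of_src (𝟙 A) 0, h0]

lemma aux_filt_mono (S : PreExt C) {P P' : Set C} (h : P ⊆ P') :
    S.Filt P ⊆ S.Filt P' := by
  rintro M ⟨t, c, hz, hl, hf⟩
  exact ⟨t, c, hz, hl, fun i => h (hf i)⟩

lemma aux_mem_filt_of_isZero (S : PreExt C) {Z : C} (hz : IsZero Z) (P : Set C) :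
    Z ∈ S.Filt P :=
  ⟨0, ⟨fun _ => Z, Fin.elim0, fun i => i.elim0, fun i => i.elim0, fun i => i.elim0,
    fun i => i.elim0⟩, hz, rfl, fun i => i.elim0⟩

/-- Truncation of a filtration chain. -/
def auxTrunc {S : PreExt C} {t : ℕ} (c : S.FChain t) (l : ℕ) (h : l ≤ t) :
    S.FChain l where
  obj i := c.obj ⟨i.1, Nat.lt_of_lt_of_le i.isLt (Nat.succ_le_succ h)⟩
  factor i := c.factor ⟨i.1, Nat.lt_of_lt_of_le i.isLt h⟩
  f i := c.f ⟨i.1, Nat.lt_of_lt_of_le i.isLt h⟩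
  g i := c.g ⟨i.1, Nat.lt_of_lt_of_le i.isLt h⟩
  δ i := c.δ ⟨i.1, Nat.lt_of_lt_of_le i.isLt h⟩
  ext i := c.ext ⟨i.1, Nat.lt_of_lt_of_le i.isLt h⟩

lemma aux_obj_mem_filt {S : PreExt C} {t : ℕ} {c : S.FChain t} {P : Set C}
    (hz : IsZero (c.obj 0)) (hf : ∀ i, c.factor i ∈ P) (j : Fin (t + 1)) :
    c.obj j ∈ S.Filt P := by
  refine ⟨j.1, auxTrunc c j.1 (Nat.lt_succ_iff.mp j.isLt), ?_, rfl, fun i => hf _⟩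
  have h0 : (auxTrunc c j.1 (Nat.lt_succ_iff.mp j.isLt)).obj 0 = c.obj 0 := by
    show c.obj _ = c.obj 0
    congr 1
    all_goals (apply Fin.ext; simp)
  rw [h0]
  exact hz

lemma aux_mem_filt_of_mem {S : PreExt C} (hS : S.IsET) {X : C} {P : Set C} (hX : X ∈ P) :
    X ∈ S.Filt P := by
  have hsnd : (biprod.snd : (0 : C) ⊞ X ⟶ X) ≫ biprod.inr = 𝟙 _ := by
    apply biprod.hom_ext
    · exact (isZero_zero C).eq_of_tgt _ _
    · simp
  have hext : S.IsExtriangle (biprod.inl ≫ biprod.snd : (0 : C) ⟶ X)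
      (biprod.inr ≫ biprod.snd) (0 : S.Ext X (0 : C)) :=
    hS.realize_iso (Iso.mk biprod.snd biprod.inr hsnd biprod.inr_snd)
      (hS.realize_zero (0 : C) X)
  refine ⟨1, ⟨fun j => match j with
      | ⟨0, _⟩ => (0 : C)
      | ⟨_ + 1, _⟩ => X,
    fun _ => X,
    fun i => match i with
      | ⟨0, _⟩ => biprod.inl ≫ biprod.snd
      | ⟨j + 1, h⟩ => absurd h (by omega),
    fun i => match i with
      | ⟨0, _⟩ => biprod.inr ≫ biprod.snd
      | ⟨j + 1, h⟩ => absurd h (by omega),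
    fun i => match i with
      | ⟨0, _⟩ => (0 : S.Ext X (0 : C))
      | ⟨j + 1, h⟩ => absurd h (by omega),
    fun i => match i with
      | ⟨0, _⟩ => hext
      | ⟨j + 1, h⟩ => absurd h (by omega)⟩, isZero_zero C, rfl, fun _ => hX⟩

theorem stmt17 (S : PreExt C) (hS : S.IsET) (art : ArtinLinear R S)
    {n : ℕ} (Φ Q : Fin n → C) (hΦ : IsStratSys S Φ)
    (hps1 : ∀ i j : Fin n, ∀ δ : S.Ext (Q i) (Φ j), δ = 0)
    (d : ProjData S Φ Q) (hmin : ∀ i, RightMinimal (d.q i))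
    (hle : ∀ i, S.HomLeftExactOn (Q i) (S.Filt (Set.range Φ))) :
    ∀ i, d.q i ≠ 0 := by
  have himg : ∀ i : Fin n, Φ '' {j | i < j} ⊆ Set.range Φ := by
    rintro i _ ⟨j, -, rfl⟩
    exact ⟨j, rfl⟩
  suffices H : ∀ k : ℕ, ∀ i : Fin n, n - i.1 ≤ k → d.q i ≠ 0 by
    intro i
    exact H n i (by omega)
  intro k
  induction k with
  | zero =>
    intro i hi
    exact absurd hi (by have := i.isLt; omega)
  | succ k ih =>
    intro i hi hq0
    haveI h0 : IsIso (0 : Q i ⟶ Q i) := hmin i 0 (by rw [zero_comp, hq0])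
    have hid : 𝟙 (Q i) = 0 := by
      have h := IsIso.hom_inv_id (0 : Q i ⟶ Q i)
      rw [zero_comp] at h
      exact h.symm
    have hQz : IsZero (Q i) := (IsZero.iff_id_eq_zero _).mpr hid
    obtain ⟨t, c, hz, hK, hfac⟩ := d.kmem i
    have memobj : ∀ j : Fin (t + 1), c.obj j ∈ S.Filt (Set.range Φ) :=
      fun j => aux_filt_mono S (himg i) (aux_obj_mem_filt hz hfac j)
    have memfac : ∀ l : Fin t, c.factor l ∈ S.Filt (Set.range Φ) :=
      fun l => aux_mem_filt_of_mem hS (himg i (hfac l))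
    have memK : d.K i ∈ S.Filt (Set.range Φ) := by
      rw [← hK]; exact memobj (Fin.last t)
    have memQ : Q i ∈ S.Filt (Set.range Φ) := aux_mem_filt_of_isZero S hQz _
    have memΦi : Φ i ∈ S.Filt (Set.range Φ) := aux_mem_filt_of_mem hS ⟨i, rfl⟩
    cases t with
    | zero =>
      have hKz : IsZero (d.K i) := by
        rw [← hK]
        exact hz
      have hη0 : d.η i = 0 := aux_ext_eq_zero_of_isZero hS hKz _
      obtain ⟨e, -, -⟩ := hS.realize_unique (hη0 ▸ d.ext i) (hS.realize_zero (d.K i) (Φ i))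
      have h1 : 𝟙 (Φ i) = biprod.inr ≫ (e.inv ≫ e.hom) ≫ biprod.snd := by simp
      rw [hQz.eq_of_tgt e.inv 0] at h1
      have hΦid : 𝟙 (Φ i) = 0 := by simpa using h1
      exact (hΦ.indec i).1 ((IsZero.iff_id_eq_zero _).mpr hΦid)
    | succ t' =>
      have ht0 : (0 : ℕ) < t' + 1 := Nat.succ_pos _
      obtain ⟨m, him, hm⟩ := hfac ⟨0, ht0⟩
      have hz0 : IsZero (c.obj (Fin.castSucc ⟨0, ht0⟩)) := by
        have hcast : (Fin.castSucc (⟨0, ht0⟩ : Fin (t' + 1))) = (0 : Fin (t' + 2)) := by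
          apply Fin.ext
          simp
        rw [hcast]
        exact hz
      have hδ0 : c.δ ⟨0, ht0⟩ = 0 := aux_ext_eq_zero_of_isZero hS hz0 _
      obtain ⟨e', -, -⟩ := hS.realize_unique (hδ0 ▸ c.ext ⟨0, ht0⟩)
        (hS.realize_zero (c.obj (Fin.castSucc ⟨0, ht0⟩)) (c.factor ⟨0, ht0⟩))
      have hsnd : (biprod.snd :
          c.obj (Fin.castSucc ⟨0, ht0⟩) ⊞ c.factor ⟨0, ht0⟩ ⟶ _) ≫ biprod.inr = 𝟙 _ := by
        apply biprod.hom_ext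
        · exact hz0.eq_of_tgt _ _
        · simp
      have e2 : c.factor ⟨0, ht0⟩ ≅ c.obj (Fin.succ ⟨0, ht0⟩) :=
        ⟨biprod.inr ≫ e'.inv, e'.hom ≫ biprod.snd, by
          rw [Category.assoc, e'.inv_hom_id_assoc, biprod.inr_snd], by
          rw [Category.assoc, ← Category.assoc biprod.snd biprod.inr e'.inv, hsnd,
            Category.id_comp, e'.hom_inv_id]⟩
      have step : ∀ (l : Fin (t' + 1)) (u v : Q m ⟶ c.obj l.castSucc),
          u ≫ c.f l = v ≫ c.f l → u = v := by
        intro l u v huv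
        exact hle m _ _ _ (c.f l) (c.g l) (c.δ l) (memobj l.castSucc) (memobj l.succ)
          (memfac l) (c.ext l) u v huv
      have key : ∀ j : ℕ, 1 ≤ j → ∀ hj : j ≤ t' + 1,
          ∃ ψ : c.obj ⟨1, by omega⟩ ⟶ c.obj ⟨j, by omega⟩,
            ∀ u v : Q m ⟶ c.obj ⟨1, by omega⟩, u ≫ ψ = v ≫ ψ → u = v := by
        intro j
        induction j with
        | zero => intro h; exact absurd h (by omega)
        | succ j ihj =>
          intro _h1 hj
          by_cases hj0 : j = 0
          · subst hj0
            exact ⟨𝟙 _, fun u v h => by simpa only [Category.comp_id] using h⟩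
          · obtain ⟨ψ, hψ⟩ := ihj (by omega) (by omega)
            refine ⟨ψ ≫ c.f ⟨j, by omega⟩, fun u v h => ?_⟩
            apply hψ
            apply step ⟨j, by omega⟩ (u ≫ ψ) (v ≫ ψ)
            simp only [← Category.assoc] at h
            exact h
      obtain ⟨ψ, hψ⟩ := key (t' + 1) (by omega) (le_refl _)
      set u : Q m ⟶ c.obj (⟨1, by omega⟩ : Fin (t' + 2)) :=
        d.q m ≫ eqToHom hm ≫ e2.hom with hu
      have hφ : (u ≫ ψ ≫ eqToHom hK) ≫ d.k i = 0 ≫ d.k i := hQz.eq_of_tgt _ _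
      have hφ0 : u ≫ ψ ≫ eqToHom hK = 0 :=
        hle m _ _ _ (d.k i) (d.q i) (d.η i) memK memQ memΦi (d.ext i) _ 0 hφ
      have hu0 : u = 0 := by
        apply hψ u 0
        rw [zero_comp]
        rw [← Category.assoc] at hφ0
        have h2 := congrArg (fun z => z ≫ eqToHom hK.symm) hφ0
        simpa using h2
      have hqm : d.q m = 0 := by
        have h3 := congrArg (fun z => z ≫ e2.inv ≫ eqToHom hm.symm) hu0
        simpa only [hu, Category.assoc, Iso.hom_inv_id_assoc, eqToHom_trans, eqToHom_refl,
          Category.comp_id, zero_comp] using h3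
      exact ih m (by
        have h5 : i.1 < m.1 := him
        have := i.isLt
        omega) hqm

end Statements

end ExtriPaper
end
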